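/- Let X and Y be nonempty compact subsets of ℂ with Y ⊆ X. If R(X) = C(X, ℂ) (that is, every continuous complex-valued function on X is a uniform limit on X of rational functions with poles off X), then R(Y) = C(Y, ℂ). -/

import Mathlib

open Metric Set

/-- `R₀(X)`: the restrictions to `X` of rational functions with poles off `X`, i.e. quotients
`p/q` of complex polynomials with `q` nonvanishing on `X`. -/
def R0set (X : Set ℂ) : Set C(X, ℂ) :=
  {f | ∃ p q : Polynomial ℂ, (∀ x : X, q.eval (x : ℂ) ≠ 0) ∧
    ∀ x : X, f x = p.eval (x : ℂ) / q.eval (x : ℂ)}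

/-- `R(X)`: the uniform closure in `C(X, ℂ)` of the rational functions with poles off `X`.
(On the compact space `X` the topology of `C(X, ℂ)` is that of uniform convergence.) -/
noncomputable def Rx (X : Set ℂ) [CompactSpace X] : Subalgebra ℂ C(X, ℂ) :=
  (Algebra.adjoin ℂ (R0set X)).topologicalClosure

/-- A bounded point derivation on `R(X)` at `x`: a continuous linear functional `d` on `R(X)`
satisfying `d(fg) = f(x)d(g) + d(f)g(x)` for all `f, g ∈ R(X)`. -/
def IsBPD (X : Set ℂ) [CompactSpace X] (x : X) (d : Rx X →L[ℂ] ℂ) : Prop :=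
  ∀ f g : Rx X, d (f * g) = (f : C(X, ℂ)) x * d g + d f * (g : C(X, ℂ)) x

/-- `R(X)` is regular: for every closed `E ⊆ X` and `x ∈ X ∖ E` there is `f ∈ R(X)` with
`f(x) = 1` and `f ≡ 0` on `E`. -/
def RxRegular (X : Set ℂ) [CompactSpace X] : Prop :=
  ∀ E : Set X, IsClosed E → ∀ x : X, x ∉ E →
    ∃ f ∈ Rx X, f x = 1 ∧ ∀ y ∈ E, f y = 0

/-- if `R(X) = C(X, ℂ)` and `Y ⊆ X` (both nonempty compact), then
`R(Y) = C(Y, ℂ)`. -/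
theorem stmt_0 (X Y : Set ℂ) [CompactSpace X] [CompactSpace Y]
    (hXc : IsCompact X) (hYc : IsCompact Y) (hXne : X.Nonempty) (hYne : Y.Nonempty)
    (hYX : Y ⊆ X) (h : Rx X = ⊤) : Rx Y = ⊤ := by
  have hYclosed : IsClosed Y := hYc.isClosed
  let ι : C(Y, X) := ⟨Set.inclusion hYX, continuous_inclusion hYX⟩
  let A : C(X, ℂ) →ₐ[ℂ] C(Y, ℂ) := ContinuousMap.compRightAlgHom ℂ ℂ ι
  have hAcont : Continuous A := ContinuousMap.compRightAlgHom_continuous ℂ ℂ ι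
  -- A maps R0set X into R0set Y
  have hR0 : ∀ f ∈ R0set X, A f ∈ R0set Y := by
    rintro f ⟨p, q, hq, hf⟩
    exact ⟨p, q, fun y => hq ⟨y, hYX y.2⟩, fun y => hf ⟨y, hYX y.2⟩⟩
  -- hence A maps Rx X into Rx Y
  have hmap : ∀ f : C(X, ℂ), A f ∈ Rx Y := by
    have hadj : Algebra.adjoin ℂ (R0set X) ≤ (Rx Y).comap A := by
      rw [Algebra.adjoin_le_iff]
      intro g hg
      exact Subalgebra.le_topologicalClosure _ (Algebra.subset_adjoin (hR0 g hg))
    have hclosed : IsClosed ((Rx Y).comap A : Set C(X, ℂ)) :=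
      (Subalgebra.isClosed_topologicalClosure _).preimage hAcont
    have hle : Rx X ≤ (Rx Y).comap A :=
      Subalgebra.topologicalClosure_minimal hadj hclosed
    intro f
    exact hle (h ▸ Algebra.mem_top)
  -- A is surjective, by Tietze extension
  have hs : IsClosed ((Subtype.val : X → ℂ) ⁻¹' Y) := hYclosed.preimage continuous_subtype_val
  let j : C(((Subtype.val : X → ℂ) ⁻¹' Y), Y) :=
    ⟨fun x => ⟨(x : X), x.2⟩,
      Continuous.subtype_mk (continuous_subtype_val.comp continuous_subtype_val) _⟩
  have hsurj : Function.Surjective A := by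
    intro g
    obtain ⟨F, hF⟩ := (g.comp j).exists_restrict_eq hs
    refine ⟨F, ?_⟩
    ext y
    have := ContinuousMap.congr_fun hF ⟨Set.inclusion hYX y, y.2⟩
    simpa [A, ι, j] using this
  rw [eq_top_iff]
  intro g _
  obtain ⟨f, rfl⟩ := hsurj g
  exact hmap f
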